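/- arXiv:2604.20212 — 2 statements merged into one kernel-verified Lean document; each statement's English description precedes it below -/
import Mathlib

section
/- The Jucys–Murphy elements y_1 = 1 and y_k = 1 + (q−q⁻¹)(T_{(1,k)} + T_{(2,k)} + ⋯ + T_{(k−1,k)}) of the Hecke algebra H_r pairwise commute: y_j y_k = y_k y_j for all 1 ≤ j, k ≤ r. -/
open Finset

noncomputable section

/-- The Hecke-algebra element `T_{(i,k)}` associated to the transposition `(i,k)`
(1-indexed, `i < k`), computed along the reduced word
`T_{(i,k)} = T_{k-1} ⋯ T_{i+1} T_i T_{i+1} ⋯ T_{k-1}`; here `Ttrans T i d = T_{(i, i+1+d)}`. -/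
def Ttrans {A : Type*} [Ring A] (T : ℕ → A) (i : ℕ) : ℕ → A :=
  fun d => Nat.rec (T i) (fun d' ih => T (i + 1 + d') * ih * T (i + 1 + d')) d

/-- The Jucys–Murphy element `y_k = 1 + (q - q⁻¹)(T_{(1,k)} + ⋯ + T_{(k-1,k)})`. -/
def JMy {K : Type*} [Field K] {A : Type*} [Ring A] [Algebra K A]
    (q : K) (T : ℕ → A) (k : ℕ) : A :=
  1 + (q - q⁻¹) • ∑ i ∈ Finset.Ico 1 k, Ttrans T i (k - i - 1)

section JMaux

variable {K : Type*} [Field K] {A : Type*} [Ring A] [Algebra K A]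

lemma Ttrans_zero (T : ℕ → A) (i : ℕ) : Ttrans T i 0 = T i := rfl

lemma Ttrans_succ (T : ℕ → A) (i d : ℕ) :
    Ttrans T i (d+1) = T (i+1+d) * Ttrans T i d * T (i+1+d) := rfl

/-- The quadratic relation in the form `T_a² = 1 + (q - q⁻¹) T_a`. -/
lemma JM_quad (q : K) (hq : q ≠ 0) (r : ℕ) (T : ℕ → A)
    (hquad : ∀ a, 1 ≤ a → a ≤ r - 1 → (T a - q • 1) * (T a + q⁻¹ • 1) = 0)
    (a : ℕ) (h1 : 1 ≤ a) (h2 : a ≤ r - 1) :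
    T a * T a = 1 + (q - q⁻¹) • T a := by
  have h := hquad a h1 h2
  have hqq : q * q⁻¹ = 1 := mul_inv_cancel₀ hq
  have hqq' : q⁻¹ * q = 1 := inv_mul_cancel₀ hq
  simp only [mul_add, sub_mul, smul_sub, smul_mul_assoc, mul_smul_comm, mul_one, one_mul,
    smul_smul, hqq, hqq', one_smul] at h
  linear_combination (norm := module) h

/-- A generator `T_b` distant from all letters of `Ttrans T i d` commutes with it. -/
lemma JM_distal (r : ℕ) (T : ℕ → A)
    (hcomm : ∀ a b, 1 ≤ a → a ≤ r - 1 → 1 ≤ b → b ≤ r - 1 → a + 1 < b →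
      T a * T b = T b * T a)
    (b : ℕ) (hb1 : 1 ≤ b) (hb2 : b ≤ r - 1) :
    ∀ d i, 1 ≤ i → i + d ≤ r - 1 → (b + 1 < i ∨ i + d + 1 < b) →
      Commute (T b) (Ttrans T i d) := by
  intro d
  induction d with
  | zero =>
    intro i hi1 hi2 hor
    rw [Ttrans_zero]
    rcases hor with h | h
    · exact hcomm b i hb1 hb2 hi1 hi2 h
    · exact (hcomm i b hi1 hi2 hb1 hb2 (by omega)).symm
  | succ d ih =>
    intro i hi1 hi2 hor
    rw [Ttrans_succ]
    have h1 : Commute (T b) (T (i+1+d)) := by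
      rcases hor with h | h
      · exact hcomm b (i+1+d) hb1 hb2 (by omega) (by omega) (by omega)
      · exact (hcomm (i+1+d) b (by omega) (by omega) hb1 hb2 (by omega)).symm
    exact (h1.mul_right (ih i hi1 (by omega) (by omega))).mul_right h1

/-- `T_m T_{(m+1,k)} T_m = T_{(m,k)}`. -/
lemma JM_lemA (r : ℕ) (T : ℕ → A)
    (hbraid : ∀ a, 1 ≤ a → a + 1 ≤ r - 1 →
      T a * T (a + 1) * T a = T (a + 1) * T a * T (a + 1))
    (hcomm : ∀ a b, 1 ≤ a → a ≤ r - 1 → 1 ≤ b → b ≤ r - 1 → a + 1 < b →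
      T a * T b = T b * T a) :
    ∀ d m, 1 ≤ m → m + 1 + d ≤ r - 1 →
      T m * Ttrans T (m+1) d * T m = Ttrans T m (d+1) := by
  intro d
  induction d with
  | zero =>
    intro m hm1 hm2
    rw [Ttrans_zero, Ttrans_succ, Ttrans_zero]
    exact hbraid m hm1 (by omega)
  | succ d ih =>
    intro m hm1 hm2
    have hd : (m+1)+1+d = m+1+(d+1) := by omega
    rw [Ttrans_succ, Ttrans_succ, ← ih m hm1 (by omega)]
    have h1 : Commute (T m) (T (m+1+1+d)) :=
      hcomm m (m+1+1+d) hm1 (by omega) (by omega) (by omega) (by omega)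
    rw [hd]
    calc T m * (T (m+1+(d+1)) * Ttrans T (m+1) d * T (m+1+(d+1))) * T m
        = (T m * T (m+1+(d+1))) * Ttrans T (m+1) d * (T (m+1+(d+1)) * T m) := by
          simp only [mul_assoc]
      _ = (T (m+1+(d+1)) * T m) * Ttrans T (m+1) d * (T m * T (m+1+(d+1))) := by
          rw [show m+1+(d+1) = m+1+1+d by omega, h1.eq]
      _ = T (m+1+(d+1)) * (T m * Ttrans T (m+1) d * T m) * T (m+1+(d+1)) := by
          simp only [mul_assoc]

/-- `T_m` commutes with `Ttrans T i d` when `i < m < i + d`. -/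
lemma JM_mid (r : ℕ) (T : ℕ → A)
    (hbraid : ∀ a, 1 ≤ a → a + 1 ≤ r - 1 →
      T a * T (a + 1) * T a = T (a + 1) * T a * T (a + 1))
    (hcomm : ∀ a b, 1 ≤ a → a ≤ r - 1 → 1 ≤ b → b ≤ r - 1 → a + 1 < b →
      T a * T b = T b * T a) :
    ∀ d i m, 1 ≤ i → i < m → m < i + d → i + d ≤ r - 1 →
      Commute (T m) (Ttrans T i d) := by
  intro d
  induction d with
  | zero => intro i m h1 h2 h3 h4; omega
  | succ d ih =>
    intro i m h1 h2 h3 h4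
    rw [Ttrans_succ]
    by_cases hc : m < i + d
    · have hout : Commute (T m) (T (i+1+d)) :=
        hcomm m (i+1+d) (by omega) (by omega) (by omega) (by omega) (by omega)
      exact (hout.mul_right (ih i m h1 h2 hc (by omega))).mul_right hout
    · have hm : m = i + d := by omega
      have hd : d ≠ 0 := by omega
      obtain ⟨f, rfl⟩ : ∃ f, d = f + 1 := ⟨d - 1, by omega⟩
      have hif : i + 1 + f = m := by omega
      rw [Ttrans_succ, hif, show i+1+(f+1) = m+1 by omega]
      set U := Ttrans T i f with hU
      have hUb : Commute (T (m+1)) U :=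
        JM_distal r T hcomm (m+1) (by omega) (by omega) f i h1 (by omega) (by omega)
      have hbr : T m * T (m+1) * T m = T (m+1) * T m * T (m+1) :=
        hbraid m (by omega) (by omega)
      show T m * (T (m+1) * (T m * U * T m) * T (m+1))
          = (T (m+1) * (T m * U * T m) * T (m+1)) * T m
      calc T m * (T (m+1) * (T m * U * T m) * T (m+1))
          = (T m * T (m+1) * T m) * U * (T m * T (m+1)) := by simp only [mul_assoc]
        _ = (T (m+1) * T m * T (m+1)) * U * (T m * T (m+1)) := by rw [hbr]
        _ = T (m+1) * T m * (T (m+1) * U) * (T m * T (m+1)) := by simp only [mul_assoc]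
        _ = T (m+1) * T m * (U * T (m+1)) * (T m * T (m+1)) := by rw [hUb.eq]
        _ = T (m+1) * (T m * U) * (T (m+1) * T m * T (m+1)) := by simp only [mul_assoc]
        _ = T (m+1) * (T m * U) * (T m * T (m+1) * T m) := by rw [hbr]
        _ = (T (m+1) * (T m * U * T m) * T (m+1)) * T m := by simp only [mul_assoc]

/-- `T_m` commutes with the Jucys–Murphy sum for `y_k` when `m + 2 ≤ k ≤ r`. -/
lemma JM_T_comm_S (q : K) (hq : q ≠ 0) (r : ℕ) (T : ℕ → A)
    (hquad : ∀ a, 1 ≤ a → a ≤ r - 1 → (T a - q • 1) * (T a + q⁻¹ • 1) = 0)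
    (hbraid : ∀ a, 1 ≤ a → a + 1 ≤ r - 1 →
      T a * T (a + 1) * T a = T (a + 1) * T a * T (a + 1))
    (hcomm : ∀ a b, 1 ≤ a → a ≤ r - 1 → 1 ≤ b → b ≤ r - 1 → a + 1 < b →
      T a * T b = T b * T a)
    (k m : ℕ) (hm : 1 ≤ m) (hmk : m + 2 ≤ k) (hkr : k ≤ r) :
    Commute (T m) (∑ i ∈ Finset.Ico 1 k, Ttrans T i (k - i - 1)) := by
  have hmr : m ≤ r - 1 := by omega
  unfold Commute SemiconjBy
  rw [Finset.mul_sum, Finset.sum_mul, ← sub_eq_zero, ← Finset.sum_sub_distrib]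
  have hsub : ({m, m+1} : Finset ℕ) ⊆ Finset.Ico 1 k := by
    intro x hx
    simp only [Finset.mem_insert, Finset.mem_singleton] at hx
    rcases hx with rfl | rfl <;> simp [Finset.mem_Ico] <;> omega
  rw [← Finset.sum_subset hsub]
  · rw [Finset.sum_pair (by omega : m ≠ m + 1)]
    have hd : k - (m+1) - 1 + 1 = k - m - 1 := by omega
    have hA : T m * Ttrans T (m+1) (k - (m+1) - 1) * T m = Ttrans T m (k - m - 1) := by
      rw [← hd]; exact JM_lemA r T hbraid hcomm (k - (m+1) - 1) m hm (by omega)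
    set B := Ttrans T (m+1) (k - (m+1) - 1) with hB
    rw [← hA]
    have hq2 : T m * T m = 1 + (q - q⁻¹) • T m := JM_quad q hq r T hquad m hm hmr
    calc T m * (T m * B * T m) - T m * B * T m * T m + (T m * B - B * T m)
        = (T m * T m) * (B * T m) - (T m * B) * (T m * T m) + (T m * B - B * T m) := by
          simp only [mul_assoc]
      _ = (1 + (q - q⁻¹) • T m) * (B * T m) - (T m * B) * (1 + (q - q⁻¹) • T m)
            + (T m * B - B * T m) := by rw [hq2]
      _ = 0 := by
          simp only [add_mul, mul_add, one_mul, mul_one, smul_mul_assoc, mul_smul_comm,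
            mul_assoc]
          abel
  · intro i hi hni
    simp only [Finset.mem_Ico] at hi
    simp only [Finset.mem_insert, Finset.mem_singleton, not_or] at hni
    rw [sub_eq_zero]
    rcases Nat.lt_or_ge i m with h | h
    · exact JM_mid r T hbraid hcomm (k - i - 1) i m hi.1 h (by omega) (by omega)
    · exact JM_distal r T hcomm m hm hmr (k - i - 1) i hi.1 (by omega) (Or.inl (by omega))

/-- `Ttrans T i d` commutes with the Jucys–Murphy sum for `y_k` when `i + d + 2 ≤ k`. -/
lemma JM_Ttrans_comm_S (q : K) (hq : q ≠ 0) (r : ℕ) (T : ℕ → A)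
    (hquad : ∀ a, 1 ≤ a → a ≤ r - 1 → (T a - q • 1) * (T a + q⁻¹ • 1) = 0)
    (hbraid : ∀ a, 1 ≤ a → a + 1 ≤ r - 1 →
      T a * T (a + 1) * T a = T (a + 1) * T a * T (a + 1))
    (hcomm : ∀ a b, 1 ≤ a → a ≤ r - 1 → 1 ≤ b → b ≤ r - 1 → a + 1 < b →
      T a * T b = T b * T a)
    (k : ℕ) (hkr : k ≤ r) :
    ∀ d i, 1 ≤ i → i + d + 2 ≤ k →
      Commute (Ttrans T i d) (∑ i ∈ Finset.Ico 1 k, Ttrans T i (k - i - 1)) := by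
  intro d
  induction d with
  | zero =>
    intro i h1 h2
    rw [Ttrans_zero]
    exact JM_T_comm_S q hq r T hquad hbraid hcomm k i h1 (by omega) hkr
  | succ d ih =>
    intro i h1 h2
    rw [Ttrans_succ]
    have hout : Commute (T (i+1+d)) (∑ i ∈ Finset.Ico 1 k, Ttrans T i (k - i - 1)) :=
      JM_T_comm_S q hq r T hquad hbraid hcomm k (i+1+d) (by omega) (by omega) hkr
    exact (hout.mul_left (ih i h1 (by omega))).mul_left hout

end JMaux

/-- In the Iwahori–Hecke algebra `H_r` of type A — i.e. in any algebra with elements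
`T_1, …, T_{r-1}` satisfying the quadratic, braid, and distant-commutation relations —
the Jucys–Murphy elements `y_1, …, y_r` pairwise commute. -/
theorem jucys_murphy_commute {K : Type*} [Field K] {A : Type*} [Ring A] [Algebra K A]
    (q : K) (hq : q ≠ 0) (r : ℕ) (T : ℕ → A)
    (hquad : ∀ a, 1 ≤ a → a ≤ r - 1 → (T a - q • 1) * (T a + q⁻¹ • 1) = 0)
    (hbraid : ∀ a, 1 ≤ a → a + 1 ≤ r - 1 →
      T a * T (a + 1) * T a = T (a + 1) * T a * T (a + 1))
    (hcomm : ∀ a b, 1 ≤ a → a ≤ r - 1 → 1 ≤ b → b ≤ r - 1 → a + 1 < b →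
      T a * T b = T b * T a) :
    ∀ j k, 1 ≤ j → j ≤ r → 1 ≤ k → k ≤ r →
      JMy q T j * JMy q T k = JMy q T k * JMy q T j := by
  have key : ∀ j k, 1 ≤ j → j < k → k ≤ r →
      JMy q T j * JMy q T k = JMy q T k * JMy q T j := by
    intro j k hj hjk hkr
    have hS : Commute (∑ i ∈ Finset.Ico 1 j, Ttrans T i (j - i - 1))
        (∑ i ∈ Finset.Ico 1 k, Ttrans T i (k - i - 1)) := by
      apply Commute.sum_left
      intro i hi
      simp only [Finset.mem_Ico] at hi
      have hd : i + (j - i - 1) + 2 ≤ k := by omega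
      exact JM_Ttrans_comm_S q hq r T hquad hbraid hcomm k hkr (j - i - 1) i hi.1 hd
    unfold JMy
    set Sj := ∑ i ∈ Finset.Ico 1 j, Ttrans T i (j - i - 1)
    set Sk := ∑ i ∈ Finset.Ico 1 k, Ttrans T i (k - i - 1)
    simp only [add_mul, mul_add, one_mul, mul_one, smul_mul_assoc, mul_smul_comm,
      smul_smul, smul_add, hS.eq]
    abel
  intro j k hj hjr hk hkr
  rcases Nat.lt_trichotomy j k with h | rfl | h
  · exact key j k hj h hkr
  · rfl
  · exact (key k j hk h hjr).symm

end
end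

section
/- (Uniqueness of super characteristic roots) Let Γ(t) = Σ_{k≥0} (−1)^k α_k t^{m−n−k} be the characteristic series with coefficients α_k in an integral domain satisfying the vanishing conditions det(α_{λᵀ_i−i+j}) = 0 for λ = ((n+1)^{m+1},…) and det of the n×n Hankel-type matrix A = (α_{m−i+j})_{1≤i,j≤n} nonzero. Then over an algebraic closure of the fraction field there exist unique (up to reordering) elements ω_1,…,ω_m, ϖ_1,…,ϖ_n such that Γ(t)·Π_{i=1}^n (t − ϖ_i) = Π_{j=1}^m (t − ω_j). -/
open Finset

noncomputable section

/-- Elementary symmetric function of the values of `v`. -/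
def esymmOf {F : Type*} [CommRing F] {s : ℕ} (v : Fin s → F) (k : ℕ) : F :=
  ∑ S ∈ Finset.powersetCard k (Finset.univ : Finset (Fin s)), ∏ i ∈ S, v i

/-- The Laurent-series identity `Γ(t) ∏_{i=1}^n (t − ϖ_i) = ∏_{j=1}^m (t − ω_j)`,
where `Γ(t) = Σ_{k≥0} (−1)^k α_k t^{m−n−k}`, written out on the coefficients of `t`:
for every `c ≥ 0`, `Σ_{j=0}^{n} α_{c−j} e_j(ϖ) = e_c(ω)` (with `α` extended by `0`
to negative indices, and `e_c(ω) = 0` for `c > m`). -/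
def GammaFactors {F : Type*} [CommRing F] (m n : ℕ) (α : ℤ → F)
    (ω : Fin m → F) (ϖ : Fin n → F) : Prop :=
  ∀ c : ℕ, (∑ j ∈ Finset.range (n + 1), α ((c : ℤ) - (j : ℤ)) * esymmOf ϖ j)
    = esymmOf ω c

namespace SuperChar
open Polynomial

variable {F : Type*} [Field F]

lemma esymmOf_eq_esymm {s : ℕ} (v : Fin s → F) (k : ℕ) :
    esymmOf v k = (Finset.univ.val.map v).esymm k := by
  rw [Finset.esymm_map_val]; rfl

lemma esymmOf_zero {s : ℕ} (v : Fin s → F) : esymmOf v 0 = 1 := by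
  simp [esymmOf]

lemma esymmOf_of_gt {s : ℕ} (v : Fin s → F) {k : ℕ} (h : s < k) : esymmOf v k = 0 := by
  rw [esymmOf, Finset.powersetCard_eq_empty.2 (by simpa using h), Finset.sum_empty]

lemma map_univ_eq_ofFn {m : ℕ} (v : Fin m → F) :
    Multiset.map v Finset.univ.val = ↑(List.ofFn v) := by
  have : (Finset.univ : Finset (Fin m)).val = ↑(List.finRange m) := rfl
  rw [this, Multiset.map_coe, ← List.ofFn_eq_map]

lemma exists_enum {m : ℕ} (s : Multiset F) (h : Multiset.card s = m) :
    ∃ v : Fin m → F, Multiset.map v Finset.univ.val = s := by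
  have hl : s.toList.length = m := by rw [Multiset.length_toList, h]
  refine ⟨fun i => s.toList.get (Fin.cast hl.symm i), ?_⟩
  rw [map_univ_eq_ofFn]
  have : List.ofFn (fun i => s.toList.get (Fin.cast hl.symm i)) = s.toList := by
    apply List.ext_get (by simp [hl])
    intro i h1 h2
    simp
  rw [this, Multiset.coe_toList]

lemma multiset_eq_of_esymm_eq {n : ℕ} {s t : Multiset F} (hs : Multiset.card s = n)
    (ht : Multiset.card t = n) (h : ∀ k, s.esymm k = t.esymm k) : s = t := by
  have hps : (s.map fun a => X - C a).prod = (t.map fun a => X - C a).prod := by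
    ext k
    rcases le_or_gt k n with hk | hk
    · rw [Multiset.prod_X_sub_C_coeff s (by omega), Multiset.prod_X_sub_C_coeff t (by omega),
        hs, ht, h]
    · rw [Polynomial.coeff_eq_zero_of_natDegree_lt, Polynomial.coeff_eq_zero_of_natDegree_lt] <;>
        rw [Polynomial.natDegree_multiset_prod_X_sub_C_eq_card] <;> omega
  have := congrArg Polynomial.roots hps
  rwa [Polynomial.roots_multiset_prod_X_sub_C, Polynomial.roots_multiset_prod_X_sub_C] at this

lemma exists_esymm_eq [IsAlgClosed F] (m : ℕ) (b : ℕ → F) (hb : b 0 = 1) :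
    ∃ v : Fin m → F, ∀ k, esymmOf v k = (if k ≤ m then b k else 0) := by
  set p : F[X] := ∑ c ∈ Finset.range (m + 1), Polynomial.C ((-1) ^ c * b c) * X ^ (m - c) with hp
  have hcoeff : ∀ k ≤ m, p.coeff k = (-1) ^ (m - k) * b (m - k) := by
    intro k hk
    rw [hp, Polynomial.finset_sum_coeff]
    rw [Finset.sum_eq_single (m - k)]
    · rw [Polynomial.coeff_C_mul, Polynomial.coeff_X_pow, if_pos (by omega), mul_one]
    · intro c hc hne
      rw [Polynomial.coeff_C_mul, Polynomial.coeff_X_pow, if_neg (by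
        simp only [Finset.mem_range] at hc; omega), mul_zero]
    · intro hmem
      exact absurd (Finset.mem_range.2 (by omega)) hmem
  have hcm : p.coeff m = 1 := by rw [hcoeff m le_rfl]; simp [hb]
  have hdeg : p.natDegree = m := by
    have hle : p.natDegree ≤ m := by
      apply Polynomial.natDegree_sum_le_of_forall_le
      intro c hc
      apply le_trans (Polynomial.natDegree_C_mul_le _ _)
      simpa using Nat.sub_le m c
    have hne : p ≠ 0 := fun h0 => by simp [h0] at hcm
    exact le_antisymm hle (Polynomial.le_natDegree_of_ne_zero (by rw [hcm]; exact one_ne_zero))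
  have hmonic : p.Monic := by
    rw [Polynomial.Monic, Polynomial.leadingCoeff, hdeg, hcm]
  have hroots : Multiset.card p.roots = m := by
    rw [← hdeg, ← Polynomial.splits_iff_card_roots]
    exact IsAlgClosed.splits p
  have hprod : (p.roots.map fun a => X - C a).prod = p :=
    Polynomial.prod_multiset_X_sub_C_of_monic_of_roots_card_eq hmonic (by rw [hroots, hdeg])
  have hesymm : ∀ k ≤ m, p.roots.esymm k = b k := by
    intro k hk
    have h1 : p.coeff (m - k) = (-1) ^ k * p.roots.esymm k := by
      conv_lhs => rw [← hprod]
      rw [Multiset.prod_X_sub_C_coeff p.roots (by omega), hroots]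
      congr 2 <;> omega
    rw [hcoeff (m - k) (by omega)] at h1
    have h2 : (m - (m - k)) = k := by omega
    rw [h2] at h1
    have := congrArg (fun z => (-1 : F) ^ k * z) h1
    simpa [← mul_assoc, ← pow_add, ← two_mul, pow_mul, neg_neg] using this.symm
  obtain ⟨v, hv⟩ := exists_enum p.roots hroots
  refine ⟨v, fun k => ?_⟩
  rcases le_or_gt k m with hk | hk
  · rw [if_pos hk, esymmOf_eq_esymm, hv, hesymm k hk]
  · rw [if_neg (by omega), esymmOf_of_gt _ hk]

lemma mulVec_cancel {n : ℕ} {A : Matrix (Fin n) (Fin n) F} (hA : A.det ≠ 0)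
    {x y : Fin n → F} (h : A.mulVec x = A.mulVec y) : x = y := by
  have hu : IsUnit A.det := isUnit_iff_ne_zero.2 hA
  have := congrArg (fun v => A⁻¹.mulVec v) h
  simpa [Matrix.mulVec_mulVec, Matrix.nonsing_inv_mul A hu] using this

lemma bordered {n : ℕ} (B : Matrix (Fin (n + 1)) (Fin (n + 1)) F) (hB : B.det = 0)
    (hA : (Matrix.det fun i j : Fin n => B i.succ j.castSucc) ≠ 0)
    (v : Fin (n + 1) → F) (hv : v (Fin.last n) = 1)
    (hrows : ∀ i : Fin n, ∑ j, B i.succ j * v j = 0) :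
    ∑ j, B 0 j * v j = 0 := by
  obtain ⟨w, hw0, hw⟩ := (Matrix.exists_mulVec_eq_zero_iff).2 hB
  set A : Matrix (Fin n) (Fin n) F := fun i j => B i.succ j.castSucc with hAdef
  -- u := w - w(last) • v
  set u : Fin (n + 1) → F := fun j => w j - w (Fin.last n) * v j with hu
  have hulast : u (Fin.last n) = 0 := by simp [hu, hv]
  have hurows : ∀ i : Fin n, ∑ j, B i.succ j * u j = 0 := by
    intro i
    have h1 : (B.mulVec w) i.succ = 0 := by rw [hw]; rfl
    have h2 : ∑ j, B i.succ j * w j = 0 := by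
      simpa [Matrix.mulVec, dotProduct] using h1
    have := hrows i
    calc ∑ j, B i.succ j * u j
        = ∑ j, (B i.succ j * w j - w (Fin.last n) * (B i.succ j * v j)) := by
          apply Finset.sum_congr rfl; intro j _; simp [hu]; ring
      _ = (∑ j, B i.succ j * w j) - w (Fin.last n) * ∑ j, B i.succ j * v j := by
          rw [Finset.sum_sub_distrib, Finset.mul_sum]
      _ = 0 := by rw [h2, hrows i, mul_zero, sub_zero]
  have hu' : A.mulVec (fun j => u j.castSucc) = 0 := by
    funext i
    have := hurows i
    rw [Fin.sum_univ_castSucc] at this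
    rw [hulast, mul_zero, add_zero] at this
    simpa [Matrix.mulVec, dotProduct, hAdef] using this
  have : (fun j : Fin n => u j.castSucc) = 0 := by
    apply mulVec_cancel hA
    rw [hu', Matrix.mulVec_zero]
  have huzero : u = 0 := by
    funext j
    rcases Fin.eq_castSucc_or_eq_last j with ⟨k, rfl⟩ | rfl
    · exact congrFun this k
    · exact hulast
  have hwv : w = fun j => w (Fin.last n) * v j := by
    funext j
    have h3 := congrFun huzero j
    exact sub_eq_zero.mp (by simpa [hu] using h3)
  have hwlast : w (Fin.last n) ≠ 0 := by
    intro h0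
    apply hw0
    funext j
    rw [congrFun hwv j, h0, zero_mul]; rfl
  have h0 : (B.mulVec w) 0 = 0 := by rw [hw]; rfl
  have h1 : ∑ j, B 0 j * w j = 0 := by simpa [Matrix.mulVec, dotProduct] using h0
  have h2 : w (Fin.last n) * ∑ j, B 0 j * v j = 0 := by
    rw [Finset.mul_sum]
    rw [← h1]
    apply Finset.sum_congr rfl
    intro j _
    rw [congrFun hwv j]; ring
  exact (mul_eq_zero.1 h2).resolve_left hwlast

lemma sum_reflect (α : ℤ → F) (u : ℕ → F) (d : ℤ) (s : ℕ) :
    ∑ j : Fin (s + 1), α (d + (j : ℕ)) * u (s - (j : ℕ))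
      = ∑ j ∈ Finset.range (s + 1), α (d + (s : ℤ) - (j : ℕ)) * u j := by
  rw [Fin.sum_univ_eq_sum_range (fun j => α (d + (j : ℕ)) * u (s - j)) (s + 1)]
  rw [← Finset.sum_range_reflect (fun j => α (d + (s : ℤ) - (j : ℕ)) * u j) (s + 1)]
  refine Finset.sum_congr rfl fun j hj => ?_
  have hj' := Finset.mem_range.1 hj
  have e1 : s + 1 - 1 - j = s - j := by omega
  rw [e1]
  congr 1
  have : ((s - j : ℕ) : ℤ) = (s : ℤ) - (j : ℕ) := by omega
  rw [this]; ring

end SuperChar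


open SuperChar in
/-- Existence and uniqueness (up to reordering) of the super characteristic roots:
given the nonvanishing of the `n × n` Hankel determinant `det(α_{m−i+j})` and the
vanishing of the `(n+1) × (n+1)` bordered determinants, there exist over an
algebraically closed field unique elements `ω_1,…,ω_m, ϖ_1,…,ϖ_n` with
`Γ(t) ∏ (t − ϖ_i) = ∏ (t − ω_j)`. -/
theorem super_characteristic_roots_exist_unique
    {F : Type*} [Field F] [IsAlgClosed F] (m n : ℕ) (α : ℤ → F)
    (hα0 : α 0 = 1) (hαneg : ∀ z : ℤ, z < 0 → α z = 0)
    (hA : Matrix.det (fun i j : Fin n =>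
        α ((m : ℤ) - ((i : ℕ) + 1) + ((j : ℕ) + 1))) ≠ 0)
    (hA' : ∀ k : ℤ, k < -(n : ℤ) →
      Matrix.det (fun i j : Fin (n + 1) =>
        if (i : ℕ) = 0 then α ((m : ℤ) - k - (n : ℤ) + (j : ℕ))
        else α ((m : ℤ) - ((i : ℕ) - 1 + 1) + ((j : ℕ) + 1))) = 0) :
    ∃ (ω : Fin m → F) (ϖ : Fin n → F),
      GammaFactors m n α ω ϖ ∧
      ∀ (ω' : Fin m → F) (ϖ' : Fin n → F), GammaFactors m n α ω' ϖ' →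
        (Finset.univ.val.map ω' = Finset.univ.val.map ω ∧
         Finset.univ.val.map ϖ' = Finset.univ.val.map ϖ) := by
  classical
  set A : Matrix (Fin n) (Fin n) F :=
    fun i j => α ((m : ℤ) - ((i : ℕ) + 1) + ((j : ℕ) + 1)) with hAdef
  have hAdet : A.det ≠ 0 := hA
  set y : Fin n → F := fun i => -α (((m + n - (i : ℕ) : ℕ) : ℤ)) with hy
  set x : Fin n → F := A⁻¹.mulVec y with hx
  have hAx : A.mulVec x = y := by
    rw [hx, Matrix.mulVec_mulVec, Matrix.mul_nonsing_inv A (isUnit_iff_ne_zero.2 hAdet),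
      Matrix.one_mulVec]
  set ebar : ℕ → F := fun j =>
    if h0 : j = 0 then 1 else if h : j ≤ n then x ⟨n - j, by omega⟩ else 0 with hebar
  have hebar0 : ebar 0 = 1 := by simp [hebar]
  have hebar_gt : ∀ j, n < j → ebar j = 0 := by
    intro j hj
    simp only [hebar]
    rw [dif_neg (by omega), dif_neg (by omega)]
  have hebarx : ∀ j : Fin n, ebar (n - (j : ℕ)) = x j := by
    intro j
    have hj : (j : ℕ) < n := j.isLt
    simp only [hebar]
    rw [dif_neg (by omega), dif_pos (by omega)]
    congr 1
    apply Fin.ext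
    show n - (n - (j : ℕ)) = (j : ℕ)
    omega
  have hxvec : (fun j : Fin n => ebar (n - (j : ℕ))) = x := funext hebarx
  -- rewriting the Gamma sums as Fin sums
  have hsum : ∀ (u : ℕ → F) (c : ℕ), (∑ j ∈ Finset.range (n + 1), α ((c : ℤ) - j) * u j)
      = ∑ j : Fin (n + 1), α ((c : ℤ) - n + (j : ℕ)) * u (n - (j : ℕ)) := by
    intro u c
    rw [sum_reflect α u ((c : ℤ) - n) n]
    refine Finset.sum_congr rfl fun j hj => ?_
    congr 2
    ring
  have hsplit : ∀ (u : ℕ → F), u 0 = 1 → ∀ i : Fin n,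
      (∑ j ∈ Finset.range (n + 1), α (((m + n - (i : ℕ) : ℕ) : ℤ) - j) * u j)
      = A.mulVec (fun j => u (n - (j : ℕ))) i + α (((m + n - (i : ℕ) : ℕ) : ℤ)) := by
    intro u hu i
    rw [hsum]
    rw [Fin.sum_univ_castSucc]
    have hi : (i : ℕ) < n := i.isLt
    congr 1
    · simp only [Matrix.mulVec, dotProduct, hAdef]
      refine Finset.sum_congr rfl fun j _ => ?_
      rw [show ((j.castSucc : Fin (n + 1)) : ℕ) = (j : ℕ) from rfl]
      congr 2
      omega
    · rw [show ((Fin.last n : Fin (n + 1)) : ℕ) = n from rfl]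
      rw [Nat.sub_self, hu, mul_one]
      congr 1
      omega
  set e : ℕ → F := fun c => ∑ j ∈ Finset.range (n + 1), α ((c : ℤ) - j) * ebar j with he
  have heC : ∀ c : ℕ, e c = ∑ j ∈ Finset.range (n + 1), α ((c : ℤ) - j) * ebar j :=
    fun c => rfl
  have heq_mid : ∀ c, m < c → c ≤ m + n → e c = 0 := by
    intro c hc1 hc2
    have hn : 0 < n := by omega
    set i : Fin n := ⟨m + n - c, by omega⟩ with hi
    have hc : c = m + n - (i : ℕ) := by simp only [hi]; omega
    rw [hc, heC]
    rw [hsplit ebar hebar0 i]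
    rw [hxvec, hAx, hy]
    simp
  have heq_hi : ∀ c, m + n < c → e c = 0 := by
    intro c hc
    have hk : ((m : ℤ) - c) < -(n : ℤ) := by omega
    have hBdet := hA' ((m : ℤ) - c) hk
    set B : Matrix (Fin (n + 1)) (Fin (n + 1)) F := fun i j =>
      if (i : ℕ) = 0 then α ((m : ℤ) - ((m : ℤ) - c) - (n : ℤ) + (j : ℕ))
      else α ((m : ℤ) - ((i : ℕ) - 1 + 1) + ((j : ℕ) + 1)) with hB
    set v : Fin (n + 1) → F := fun j => ebar (n - (j : ℕ)) with hv
    have hvlast : v (Fin.last n) = 1 := by simp [hv, hebar0]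
    have hsub : (Matrix.det fun i j : Fin n => B i.succ j.castSucc) ≠ 0 := by
      have : (fun i j : Fin n => B i.succ j.castSucc) = A := by
        funext i j
        simp only [hB, hAdef, Fin.val_succ, Fin.coe_castSucc]
        rw [if_neg (by omega)]
        congr 1
        push_cast
        ring
      rw [this]; exact hAdet
    have hrows : ∀ i : Fin n, ∑ j, B i.succ j * v j = 0 := by
      intro i
      have hi : (i : ℕ) < n := i.isLt
      have h1 : ∑ j : Fin (n + 1), B i.succ j * v j
          = ∑ j : Fin (n + 1), α ((((m + n - (i : ℕ) : ℕ) : ℤ)) - n + (j : ℕ))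
              * ebar (n - (j : ℕ)) := by
        refine Finset.sum_congr rfl fun j _ => ?_
        simp only [hB, hv, Fin.val_succ]
        rw [if_neg (by omega)]
        congr 2
        push_cast
        omega
      rw [h1, ← hsum ebar (m + n - (i : ℕ))]
      rw [← heC]
      exact heq_mid (m + n - (i : ℕ)) (by omega) (by omega)
    have htop := bordered B hBdet hsub v hvlast hrows
    rw [heC, hsum ebar c]
    rw [← htop]
    refine Finset.sum_congr rfl fun j _ => ?_
    simp only [hB, hv]
    rw [show ((0 : Fin (n + 1)) : ℕ) = 0 from rfl, if_pos rfl]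
    congr 2
    omega
  have he0 : e 0 = 1 := by
    rw [heC]
    rw [Finset.sum_eq_single 0]
    · simp [hebar0, hα0]
    · intro j hj hne
      rw [hαneg _ (by omega), zero_mul]
    · intro h; exact absurd (Finset.mem_range.2 (by omega)) h
  obtain ⟨ϖ, hϖ⟩ := exists_esymm_eq n ebar hebar0
  have hϖ' : ∀ k, esymmOf ϖ k = ebar k := by
    intro k
    rw [hϖ k]
    split
    · rfl
    · rw [hebar_gt k (by omega)]
  obtain ⟨ω, hω⟩ := exists_esymm_eq m e he0
  have hω' : ∀ c, esymmOf ω c = e c := by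
    intro c
    rw [hω c]
    split
    · rfl
    · rcases le_or_gt c (m + n) with h | h
      · rw [heq_mid c (by omega) h]
      · rw [heq_hi c h]
  have hGF : GammaFactors m n α ω ϖ := by
    intro c
    rw [hω' c, heC]
    refine Finset.sum_congr rfl fun j _ => ?_
    rw [hϖ' j]
  refine ⟨ω, ϖ, hGF, ?_⟩
  intro ω' ϖ' hG'
  set u : ℕ → F := fun j => esymmOf ϖ' j with hudef
  have huapp : ∀ j, u j = esymmOf ϖ' j := fun _ => rfl
  have hu0 : u 0 = 1 := esymmOf_zero ϖ'
  have hAx' : A.mulVec (fun j => u (n - (j : ℕ))) = y := by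
    funext i
    have hi : (i : ℕ) < n := i.isLt
    have h1 := hG' (m + n - (i : ℕ))
    have h2 : esymmOf ω' (m + n - (i : ℕ)) = 0 := esymmOf_of_gt ω' (by omega)
    rw [h2] at h1
    have h3 := hsplit u hu0 i
    rw [h1] at h3
    have h4 : A.mulVec (fun j => u (n - (j : ℕ))) i
        = -α (((m + n - (i : ℕ) : ℕ) : ℤ)) := by linear_combination -h3
    rw [h4, hy]
  have hux : (fun j : Fin n => u (n - (j : ℕ))) = x :=
    mulVec_cancel hAdet (by rw [hAx', hAx])
  have huebar : ∀ j, u j = ebar j := by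
    intro j
    rcases Nat.eq_zero_or_pos j with rfl | hj
    · rw [hu0, hebar0]
    · rcases le_or_gt j n with hjn | hjn
      · have h5 : (⟨n - j, by omega⟩ : Fin n) = ⟨n - j, by omega⟩ := rfl
        have h6 := congrFun hux (⟨n - j, by omega⟩ : Fin n)
        simp only at h6
        have h7 : n - (n - j) = j := by omega
        rw [h7] at h6
        rw [h6]
        simp only [hebar]
        rw [dif_neg (by omega), dif_pos hjn]
      · rw [huapp j, esymmOf_of_gt ϖ' hjn, hebar_gt j hjn]
  constructor
  · apply multiset_eq_of_esymm_eq (n := m) (by simp) (by simp)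
    intro k
    rw [← esymmOf_eq_esymm, ← esymmOf_eq_esymm]
    have h8 := hG' k
    have h9 : (∑ j ∈ Finset.range (n + 1), α ((k : ℤ) - j) * esymmOf ϖ' j) = e k := by
      rw [he]
      exact Finset.sum_congr rfl fun j _ => by
        rw [show esymmOf ϖ' j = u j from rfl, huebar j]
    rw [h9] at h8
    rw [← h8, hω' k]
  · apply multiset_eq_of_esymm_eq (n := n) (by simp) (by simp)
    intro k
    rw [← esymmOf_eq_esymm, ← esymmOf_eq_esymm]
    rw [hϖ' k, ← huebar k]


end
end
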